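/- For any finite family of points a_1,...,a_m and b_1,...,b_n in R^d, the empirical energy statistic E = (2/(mn)) ∑_{i,j} ‖a_i − b_j‖ − (1/m²) ∑_{i,j} ‖a_i − a_j‖ − (1/n²) ∑_{i,j} ‖b_i − b_j‖ is nonnegative. -/

import Mathlib

open MeasureTheory Finset Real


lemma oneD_neg_type {ι : Type*} [Fintype ι] (c : ι → ℝ) (hc : ∑ i, c i = 0) (x : ι → ℝ) :
    ∑ i, ∑ j, c i * c j * |x i - x j| ≤ 0 := by
  classical
  set g : ι → ℝ → ℝ := fun i t => if x i ≤ t then 1 else 0 with hg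
  have hsq : ∀ i j t, (g i t - g j t) ^ 2
      = Set.indicator (Set.Ico (min (x i) (x j)) (max (x i) (x j))) (1 : ℝ → ℝ) t := by
    intro i j t
    simp only [hg, Set.indicator_apply, Set.mem_Ico, Pi.one_apply, min_le_iff, lt_max_iff]
    by_cases h1 : x i ≤ t <;> by_cases h2 : x j ≤ t
    · simp [h1, h2, not_lt.2 h1, not_lt.2 h2]
    · norm_num [h1, h2, not_lt.2 h1, not_le.1 h2]
    · norm_num [h1, h2, not_le.1 h1, not_lt.2 h2]
    · simp [h1, h2, not_le.1 h1, not_le.1 h2]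
  have hint : ∀ i j, Integrable (fun t => (g i t - g j t) ^ 2) := by
    intro i j
    simp only [hsq]
    refine (integrable_indicator_iff measurableSet_Ico).2 ?_
    exact integrableOn_const (by rw [Real.volume_Ico]; exact ENNReal.ofReal_ne_top)
  have habs : ∀ i j, |x i - x j| = ∫ t, (g i t - g j t) ^ 2 := by
    intro i j
    simp only [hsq]
    rw [MeasureTheory.integral_indicator_one measurableSet_Ico, measureReal_def, Real.volume_Ico,
      ENNReal.toReal_ofReal (by simp [sub_nonneg, min_le_max]), max_sub_min_eq_abs]
    exact abs_sub_comm _ _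
  calc ∑ i, ∑ j, c i * c j * |x i - x j|
      = ∫ t, ∑ i, ∑ j, c i * c j * (g i t - g j t) ^ 2 := by
        rw [integral_finset_sum _ (fun i _ => integrable_finset_sum _
          (fun j _ => ((hint i j).const_mul _)))]
        refine Finset.sum_congr rfl fun i _ => ?_
        rw [integral_finset_sum _ (fun j _ => ((hint i j).const_mul _))]
        exact Finset.sum_congr rfl fun j _ => by rw [habs, integral_const_mul]
    _ ≤ 0 := by
        apply integral_nonpos
        intro t
        have expand : ∀ i j, c i * c j * (g i t - g j t) ^ 2
            = (g i t)^2 * c i * c j + c i * (c j * (g j t)^2)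
              - (2 * (c i * g i t)) * (c j * g j t) := fun i j => by ring
        have key : ∑ i, ∑ j, c i * c j * (g i t - g j t) ^ 2
            = -2 * (∑ i, c i * g i t) ^ 2 := by
          simp only [expand, Finset.sum_sub_distrib, Finset.sum_add_distrib, ← Finset.mul_sum,
            ← Finset.sum_mul, hc, mul_zero, zero_mul, zero_add, zero_sub]
          ring
        simp only [Pi.zero_apply, key]
        nlinarith [sq_nonneg (∑ i, c i * g i t)]

variable {d : ℕ}

local notation "⟪" x ", " y "⟫" => @inner ℝ _ _ x y

lemma gauss_exp_integrable (d : ℕ) :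
    Integrable (fun s : EuclideanSpace ℝ (Fin d) => Real.exp (-(1/2) * ‖s‖ ^ 2)) := by
  have h := (GaussianFourier.integrable_cexp_neg_mul_sq_norm_add
    (V := EuclideanSpace ℝ (Fin d)) (b := (1/2 : ℂ)) (by norm_num) 0 0).norm
  refine h.congr (Filter.Eventually.of_forall fun s => ?_)
  simp only [Complex.norm_exp]
  norm_num
  norm_cast

lemma gauss_integrable (v : EuclideanSpace ℝ (Fin d)) :
    Integrable (fun s : EuclideanSpace ℝ (Fin d) => |⟪s, v⟫| * Real.exp (-‖s‖ ^ 2)) := by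
  have hcont : Continuous (fun s : EuclideanSpace ℝ (Fin d) => |⟪s, v⟫| * Real.exp (-‖s‖ ^ 2)) :=
    ((continuous_id.inner continuous_const).abs).mul
      (Real.continuous_exp.comp ((continuous_norm.pow 2).neg))
  refine ((gauss_exp_integrable d).const_mul ‖v‖).mono' hcont.aestronglyMeasurable
    (Filter.Eventually.of_forall fun s => ?_)
  have h1 : |⟪s, v⟫| ≤ ‖s‖ * ‖v‖ := by
    simpa using abs_real_inner_le_norm s v
  have hb : ‖s‖ * Real.exp (-(1/2) * ‖s‖ ^ 2) ≤ 1 := by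
    have hx : Real.exp (-(1/2) * ‖s‖ ^ 2) = (Real.exp ((1/2) * ‖s‖ ^ 2))⁻¹ := by
      rw [← Real.exp_neg]; ring_nf
    have hpos := Real.exp_pos ((1/2) * ‖s‖ ^ 2)
    rw [hx, ← div_eq_mul_inv, div_le_one hpos]
    have h4 := Real.add_one_le_exp ((1/2) * ‖s‖ ^ 2)
    nlinarith [sq_nonneg (‖s‖ - 1), norm_nonneg s]
  have h2 : ‖s‖ * Real.exp (-‖s‖ ^ 2) ≤ Real.exp (-(1/2) * ‖s‖ ^ 2) := by
    rw [show (-‖s‖^2 : ℝ) = -(1/2) * ‖s‖^2 + -(1/2) * ‖s‖^2 by ring, Real.exp_add, ← mul_assoc]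
    have := mul_le_mul_of_nonneg_right hb (Real.exp_nonneg (-(1/2) * ‖s‖ ^ 2))
    linarith
  have h3 : 0 ≤ Real.exp (-‖s‖^2) := Real.exp_nonneg _
  rw [Real.norm_eq_abs, abs_mul, abs_abs, abs_of_nonneg h3]
  calc |⟪s, v⟫| * Real.exp (-‖s‖ ^ 2) ≤ (‖s‖ * ‖v‖) * Real.exp (-‖s‖ ^ 2) :=
        mul_le_mul_of_nonneg_right h1 h3
    _ = ‖v‖ * (‖s‖ * Real.exp (-‖s‖ ^ 2)) := by ring
    _ ≤ ‖v‖ * Real.exp (-(1/2) * ‖s‖ ^ 2) :=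
        mul_le_mul_of_nonneg_left h2 (norm_nonneg v)

lemma energy_neg_type {ι : Type*} [Fintype ι] {d : ℕ} (c : ι → ℝ) (hc : ∑ i, c i = 0)
    (x : ι → EuclideanSpace ℝ (Fin d)) :
    ∑ i, ∑ j, c i * c j * ‖x i - x j‖ ≤ 0 := by
  rcases Nat.eq_zero_or_pos d with hd | hd
  · subst hd
    have h0 : ∀ i j, ‖x i - x j‖ = (0:ℝ) := fun i j => by
      rw [Subsingleton.elim (x i - x j) 0, norm_zero]
    simp [h0]
  · set u : EuclideanSpace ℝ (Fin d) := EuclideanSpace.single ⟨0, hd⟩ 1 with hu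
    have hunorm : ‖u‖ = 1 := by rw [hu, EuclideanSpace.norm_single]; norm_num
    set C : ℝ := ∫ s : EuclideanSpace ℝ (Fin d), |⟪s, u⟫| * Real.exp (-‖s‖^2) with hC
    have hCpos : 0 < C := by
      rw [hC]
      refine (integral_pos_iff_support_of_nonneg (fun s => by positivity)
        (gauss_integrable u)).2 ?_
      have hsub : {s : EuclideanSpace ℝ (Fin d) | ⟪s, u⟫ ≠ (0:ℝ)}
          ⊆ Function.support (fun s => |⟪s, u⟫| * Real.exp (-‖s‖^2)) := by
        intro s hs
        simp only [Function.mem_support]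
        have := Real.exp_pos (-‖s‖^2)
        intro hcon
        rcases mul_eq_zero.1 hcon with h | h
        · exact hs (abs_eq_zero.1 h)
        · exact this.ne' h
      have hopen : IsOpen {s : EuclideanSpace ℝ (Fin d) | ⟪s, u⟫ ≠ (0:ℝ)} :=
        isOpen_ne.preimage (continuous_id.inner continuous_const)
      have hne : ({s : EuclideanSpace ℝ (Fin d) | ⟪s, u⟫ ≠ (0:ℝ)}).Nonempty := by
        refine ⟨u, ?_⟩
        simp only [Set.mem_setOf_eq, real_inner_self_eq_norm_sq, hunorm]
        norm_num
      exact lt_of_lt_of_le (hopen.measure_pos volume hne) (measure_mono hsub)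
    have hrot : ∀ v : EuclideanSpace ℝ (Fin d),
        (∫ s : EuclideanSpace ℝ (Fin d), |⟪s, v⟫| * Real.exp (-‖s‖^2)) = C * ‖v‖ := by
      intro v
      by_cases hv : v = 0
      · simp [hv]
      · set w : EuclideanSpace ℝ (Fin d) := ‖v‖⁻¹ • v with hwdef
        have hw : ‖w‖ = 1 := norm_smul_inv_norm hv
        set T := Submodule.reflection (ℝ ∙ (u - w))ᗮ with hT
        have hTu : T u = w := Submodule.reflection_sub (by rw [hunorm, hw])
        have hmp : MeasurePreserving T volume volume :=
          (T : EuclideanSpace ℝ (Fin d) ≃ₗᵢ[ℝ] EuclideanSpace ℝ (Fin d)).measurePreserving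
        rw [← hmp.integral_comp
          (T : EuclideanSpace ℝ (Fin d) ≃ₗᵢ[ℝ] EuclideanSpace ℝ (Fin d)).toHomeomorph.measurableEmbedding]
        have hvw : v = ‖v‖ • w := by
          rw [hwdef, smul_smul, mul_inv_cancel₀ (norm_ne_zero_iff.2 hv), one_smul]
        have hptwise : ∀ t : EuclideanSpace ℝ (Fin d),
            |⟪T t, v⟫| * Real.exp (-‖T t‖^2) = ‖v‖ * (|⟪t, u⟫| * Real.exp (-‖t‖^2)) := by
          intro t
          rw [LinearIsometryEquiv.norm_map]
          have : ⟪T t, v⟫ = ‖v‖ * ⟪t, u⟫ := by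
            conv_lhs => rw [hvw, ← hTu]
            rw [real_inner_smul_right, LinearIsometryEquiv.inner_map_map]
          rw [this, abs_mul, abs_of_nonneg (norm_nonneg v)]
          ring
        simp_rw [hptwise]
        rw [integral_const_mul, mul_comm]
    have key : ∀ i j, c i * c j * ‖x i - x j‖
        = C⁻¹ * ∫ s : EuclideanSpace ℝ (Fin d),
            c i * c j * (|⟪s, x i - x j⟫| * Real.exp (-‖s‖^2)) := by
      intro i j
      rw [integral_const_mul, hrot, ← mul_assoc, mul_comm (C⁻¹), mul_assoc, mul_assoc,
        inv_mul_cancel_left₀ hCpos.ne']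
      ring
    calc ∑ i, ∑ j, c i * c j * ‖x i - x j‖
        = C⁻¹ * ∫ s : EuclideanSpace ℝ (Fin d),
            ∑ i, ∑ j, c i * c j * (|⟪s, x i - x j⟫| * Real.exp (-‖s‖^2)) := by
          rw [integral_finset_sum _ (fun i _ => integrable_finset_sum _
            (fun j _ => (gauss_integrable (x i - x j)).const_mul _)), Finset.mul_sum]
          refine Finset.sum_congr rfl fun i _ => ?_
          rw [integral_finset_sum _ (fun j _ => (gauss_integrable (x i - x j)).const_mul _),
            Finset.mul_sum]
          exact Finset.sum_congr rfl fun j _ => key i j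
      _ ≤ 0 := by
          have hint : ∀ s : EuclideanSpace ℝ (Fin d),
              ∑ i, ∑ j, c i * c j * (|⟪s, x i - x j⟫| * Real.exp (-‖s‖^2))
                = (∑ i, ∑ j, c i * c j * |⟪s, x i⟫ - ⟪s, x j⟫|) * Real.exp (-‖s‖^2) := by
            intro s
            rw [Finset.sum_mul]
            refine Finset.sum_congr rfl fun i _ => ?_
            rw [Finset.sum_mul]
            refine Finset.sum_congr rfl fun j _ => ?_
            rw [inner_sub_right]
            ring
          have hnonpos : ∀ s : EuclideanSpace ℝ (Fin d),
              ∑ i, ∑ j, c i * c j * (|⟪s, x i - x j⟫| * Real.exp (-‖s‖^2)) ≤ 0 := by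
            intro s
            rw [hint s]
            exact mul_nonpos_of_nonpos_of_nonneg
              (oneD_neg_type c hc (fun i => ⟪s, x i⟫)) (Real.exp_nonneg _)
          have := integral_nonpos (μ := volume) (f := fun s : EuclideanSpace ℝ (Fin d) =>
            ∑ i, ∑ j, c i * c j * (|⟪s, x i - x j⟫| * Real.exp (-‖s‖^2))) hnonpos
          have hCinv : (0:ℝ) ≤ C⁻¹ := le_of_lt (inv_pos.2 hCpos)
          exact mul_nonpos_of_nonneg_of_nonpos hCinv this

open Finset in
/-- The empirical energy statistic is nonnegative. -/
theorem empirical_energy_nonneg (d m n : ℕ) (hm : 0 < m) (hn : 0 < n)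
    (a : Fin m → EuclideanSpace ℝ (Fin d)) (b : Fin n → EuclideanSpace ℝ (Fin d)) :
    0 ≤ (2 / (m * n : ℝ)) * ∑ i, ∑ j, ‖a i - b j‖
        - (1 / (m ^ 2 : ℝ)) * ∑ i, ∑ j, ‖a i - a j‖
        - (1 / (n ^ 2 : ℝ)) * ∑ i, ∑ j, ‖b i - b j‖ := by
  classical
  have hm0 : (m:ℝ) ≠ 0 := Nat.cast_ne_zero.2 hm.ne'
  have hn0 : (n:ℝ) ≠ 0 := Nat.cast_ne_zero.2 hn.ne'
  set c : Fin m ⊕ Fin n → ℝ := Sum.elim (fun _ => (m:ℝ)⁻¹) (fun _ => -(n:ℝ)⁻¹) with hcdef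
  have hc : ∑ p, c p = 0 := by
    rw [Fintype.sum_sum_type]
    simp only [hcdef, Sum.elim_inl, Sum.elim_inr, Finset.sum_const, Finset.card_univ,
      Fintype.card_fin, nsmul_eq_mul]
    rw [mul_inv_cancel₀ hm0]
    rw [mul_neg, mul_inv_cancel₀ hn0]
    ring
  have h := energy_neg_type c hc (Sum.elim a b)
  simp only [Fintype.sum_sum_type, Sum.elim_inl, Sum.elim_inr, hcdef] at h
  simp only [← Finset.mul_sum, Finset.sum_add_distrib] at h
  have hswap : ∑ i, ∑ j, ‖b i - a j‖ = ∑ i, ∑ j, ‖a i - b j‖ := by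
    rw [Finset.sum_comm]
    simp_rw [norm_sub_rev]
  rw [hswap] at h
  have e1 : (2:ℝ) / (m * n) = 2 * ((m:ℝ)⁻¹ * (n:ℝ)⁻¹) := by field_simp
  have e2 : (1:ℝ) / (m:ℝ)^2 = (m:ℝ)⁻¹ * (m:ℝ)⁻¹ := by field_simp
  have e3 : (1:ℝ) / (n:ℝ)^2 = (n:ℝ)⁻¹ * (n:ℝ)⁻¹ := by field_simp
  rw [e1, e2, e3]
  nlinarith [h]
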